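/- Let φ₁,…,φ_m : L → L' and ψ₁,…,ψ_m : N → N' be simplicial maps, and suppose β : N → L and α : L' → N' are strong equivalences with α ∘ φ_i ∘ β ∼ ψ_i for all i. Then SD(φ₁,…,φ_m) = SD(ψ₁,…,ψ_m). -/

import Mathlib

noncomputable section

/-- An abstract simplicial complex on a vertex type `V`. -/
structure ASC (V : Type) where
  faces : Set (Finset V)
  nonempty_of_mem : ∀ ⦃σ⦄, σ ∈ faces → σ.Nonempty
  down_closed : ∀ ⦃σ⦄, σ ∈ faces → ∀ ⦃τ⦄, τ ⊆ σ → τ.Nonempty → τ ∈ faces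

/-- A simplicial map between abstract simplicial complexes. -/
structure SMap {V W : Type} [DecidableEq W] (K : ASC V) (L : ASC W) where
  toFun : V → W
  map_faces : ∀ ⦃σ⦄, σ ∈ K.faces → σ.image toFun ∈ L.faces

/-- The identity simplicial map. -/
def SMap.id {V : Type} [DecidableEq V] (K : ASC V) : SMap K K :=
  ⟨fun v => v, fun σ hσ => by simpa using hσ⟩

/-- Composition of simplicial maps. -/
def SMap.comp {U V W : Type} [DecidableEq V] [DecidableEq W]
    {K : ASC U} {L : ASC V} {M : ASC W}
    (g : SMap L M) (f : SMap K L) : SMap K M :=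
  ⟨g.toFun ∘ f.toFun, fun σ hσ => by
    rw [show σ.image (g.toFun ∘ f.toFun) = (σ.image f.toFun).image g.toFun by
      simp [Finset.image_image]]
    exact g.map_faces (f.map_faces hσ)⟩

/-- Two simplicial maps are contiguous if the union of the images of every
simplex is a simplex of the codomain. -/
def Contiguous {V W : Type} [DecidableEq W] {K : ASC V} {L : ASC W}
    (f g : SMap K L) : Prop :=
  ∀ ⦃σ⦄, σ ∈ K.faces → σ.image f.toFun ∪ σ.image g.toFun ∈ L.faces

/-- Two simplicial maps are in the same contiguity class if they are joined by
a finite chain of pairwise contiguous simplicial maps. -/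
def ContigClass {V W : Type} [DecidableEq W] {K : ASC V} {L : ASC W}
    (f g : SMap K L) : Prop :=
  Relation.ReflTransGen Contiguous f g

/-- `N` is a subcomplex of `K`. -/
def IsSubcomplex {V : Type} (N K : ASC V) : Prop :=
  N.faces ⊆ K.faces

/-- Restriction of a simplicial map to a subcomplex. -/
def SMap.restrict {V W : Type} [DecidableEq W] {N K : ASC V} {L : ASC W}
    (h : IsSubcomplex N K) (f : SMap K L) : SMap N L :=
  ⟨f.toFun, fun _ hσ => f.map_faces (h hσ)⟩

/-- `SDcover φ n` : the domain is covered by `n+1` subcomplexes on each of which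
all restrictions of the maps `φ i` are pairwise in the same contiguity class. -/
def SDcover {V W : Type} [DecidableEq W] {K : ASC V} {L : ASC W} {m : ℕ}
    (φ : Fin m → SMap K L) (n : ℕ) : Prop :=
  ∃ (Ls : Fin (n + 1) → ASC V) (h : ∀ k, IsSubcomplex (Ls k) K),
    (∀ σ ∈ K.faces, ∃ k, σ ∈ (Ls k).faces) ∧
    ∀ k i j, ContigClass (SMap.restrict (h k) (φ i)) (SMap.restrict (h k) (φ j))

/-- The higher contiguity distance `SD(φ₁, …, φ_m)` as a value in `ℕ∞`. -/
def SD {V W : Type} [DecidableEq W] {K : ASC V} {L : ASC W} {m : ℕ}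
    (φ : Fin m → SMap K L) : ℕ∞ :=
  sInf {N : ℕ∞ | ∃ n : ℕ, N = n ∧ SDcover φ n}

/-- The `n`-fold categorical power of a simplicial complex. -/
def ASC.pow {V : Type} [DecidableEq V] (K : ASC V) (n : ℕ) : ASC (Fin n → V) where
  faces := {σ | σ.Nonempty ∧ ∀ i, σ.image (fun v => v i) ∈ K.faces}
  nonempty_of_mem := fun _ hσ => hσ.1
  down_closed := fun σ hσ τ hτσ hτ =>
    ⟨hτ, fun i => K.down_closed (hσ.2 i)
      (Finset.image_subset_image (f := fun v => v i) hτσ) (hτ.image _)⟩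

/-- The `i`-th projection from the `n`-fold categorical power. -/
def ASC.proj {V : Type} [DecidableEq V] (K : ASC V) (n : ℕ) (i : Fin n) :
    SMap (K.pow n) K :=
  ⟨fun v => v i, fun _ hσ => hσ.2 i⟩

/-- The power of a simplicial map. -/
def SMap.pow {V W : Type} [DecidableEq V] [DecidableEq W] {K : ASC V} {L : ASC W}
    (f : SMap K L) (n : ℕ) : SMap (K.pow n) (L.pow n) :=
  ⟨fun v i => f.toFun (v i), fun σ hσ => by
    obtain ⟨h1, h2⟩ := hσ
    refine ⟨h1.image _, fun i => ?_⟩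
    have hf := f.map_faces (h2 i)
    rw [Finset.image_image] at hf ⊢
    exact hf⟩

/-- The higher discrete topological complexity `TC_n(K)`. -/
def TCn {V : Type} [DecidableEq V] (K : ASC V) (n : ℕ) : ℕ∞ :=
  SD (fun i : Fin n => K.proj n i)

/-- The higher discrete topological complexity of a simplicial map. -/
def TCnMap {V W : Type} [DecidableEq V] [DecidableEq W] {K : ASC V} {L : ASC W}
    (φ : SMap K L) (n : ℕ) : ℕ∞ :=
  SD (fun i : Fin n => φ.comp (K.proj n i))

/-- The binary categorical product of two simplicial complexes. -/
def ASC.prod {V W : Type} [DecidableEq V] [DecidableEq W]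
    (K : ASC V) (L : ASC W) : ASC (V × W) where
  faces := {σ | σ.Nonempty ∧ σ.image Prod.fst ∈ K.faces ∧ σ.image Prod.snd ∈ L.faces}
  nonempty_of_mem := fun _ hσ => hσ.1
  down_closed := fun σ hσ τ hτσ hτ =>
    ⟨hτ, K.down_closed hσ.2.1 (Finset.image_subset_image hτσ) (hτ.image _),
      L.down_closed hσ.2.2 (Finset.image_subset_image hτσ) (hτ.image _)⟩

/-- The path complex `I_m` : vertices `0, …, m`, maximal simplices `{i, i+1}`. -/
def pathComplex (m : ℕ) : ASC (Fin (m + 1)) where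
  faces := {σ | σ.Nonempty ∧ ∃ i : ℕ, ∀ j ∈ σ, (j : ℕ) = i ∨ (j : ℕ) = i + 1}
  nonempty_of_mem := fun _ hσ => hσ.1
  down_closed := fun _ hσ _ hτσ hτ =>
    ⟨hτ, hσ.2.imp fun _ h => fun j hj => h j (hτσ hj)⟩

/-- Two simplicial complexes have the same strong homotopy type. -/
def StrongHomotopyType {V W : Type} [DecidableEq V] [DecidableEq W]
    (K : ASC V) (L : ASC W) : Prop :=
  ∃ (f : SMap K L) (g : SMap L K),
    ContigClass (g.comp f) (SMap.id K) ∧ ContigClass (f.comp g) (SMap.id L)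

/-- The one-point simplicial complex. -/
def ptASC : ASC Unit where
  faces := {σ | σ.Nonempty}
  nonempty_of_mem := fun _ hσ => hσ
  down_closed := fun _ _ _ _ hτ => hτ

/-- A simplicial complex is strongly collapsible if it has the strong homotopy
type of a point. -/
def StronglyCollapsible {V : Type} [DecidableEq V] (K : ASC V) : Prop :=
  StrongHomotopyType K ptASC

/-- The inclusion `N → N × I_m` at level `0`. -/
def inclZero {V : Type} [DecidableEq V] (N : ASC V) (m : ℕ) :
    SMap N (N.prod (pathComplex m)) :=
  ⟨fun v => (v, 0), fun σ hσ => by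
    refine ⟨(N.nonempty_of_mem hσ).image _, ?_, ?_⟩
    · rw [Finset.image_image, show (Prod.fst ∘ fun v : V => (v, (0 : Fin (m + 1))))
        = fun v => v from rfl, Finset.image_id']
      exact hσ
    · rw [Finset.image_image]
      refine ⟨(N.nonempty_of_mem hσ).image _, 0, fun j hj => ?_⟩
      simp only [Finset.mem_image, Function.comp] at hj
      obtain ⟨v, -, rfl⟩ := hj
      simp⟩

/-- A simplicial finite-fibration : the homotopy lifting property with respect
to simplicial homotopies `N × I_m → L'` with `N` finite. -/
def IsFiniteFibration {V W : Type} [DecidableEq V] [DecidableEq W]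
    {K : ASC V} {L : ASC W} (φ : SMap K L) : Prop :=
  ∀ (U : Type) [Fintype U] [DecidableEq U] (N : ASC U) (m : ℕ) (g : SMap N K)
    (G : SMap (N.prod (pathComplex m)) L),
    (∀ v, G.toFun (v, 0) = φ.toFun (g.toFun v)) →
    ∃ Gt : SMap (N.prod (pathComplex m)) K,
      (∀ v, Gt.toFun (v, 0) = g.toFun v) ∧ (∀ x, φ.toFun (Gt.toFun x) = G.toFun x)

/-- The constant simplicial map at a vertex `v₀` of `L`. -/
def constMap {V W : Type} [DecidableEq W] (K : ASC V) {L : ASC W} {v₀ : W}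
    (hv₀ : {v₀} ∈ L.faces) : SMap K L :=
  ⟨fun _ => v₀, fun σ hσ => by
    have hsub : σ.image (fun _ => v₀) ⊆ {v₀} := by
      intro x hx
      simp only [Finset.mem_image] at hx
      obtain ⟨v, -, rfl⟩ := hx
      simp
    exact L.down_closed hv₀ hsub ((K.nonempty_of_mem hσ).image _)⟩

/-- A simplicial map is a strong equivalence if it admits an inverse up to
contiguity class. -/
def IsStrongEquiv {V W : Type} [DecidableEq V] [DecidableEq W]
    {K : ASC V} {L : ASC W} (f : SMap K L) : Prop :=
  ∃ g : SMap L K,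
    ContigClass (g.comp f) (SMap.id K) ∧ ContigClass (f.comp g) (SMap.id L)

section Aux

lemma Contiguous.symm' {V W : Type} [DecidableEq W] {K : ASC V} {L : ASC W}
    {f g : SMap K L} (h : Contiguous f g) : Contiguous g f := fun σ hσ => by
  rw [Finset.union_comm]; exact h hσ

lemma ContigClass.symm' {V W : Type} [DecidableEq W] {K : ASC V} {L : ASC W}
    {f g : SMap K L} (h : ContigClass f g) : ContigClass g f := by
  induction h with
  | refl => exact Relation.ReflTransGen.refl
  | tail _ hc ih =>
      exact Relation.ReflTransGen.trans (Relation.ReflTransGen.single hc.symm') ih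

lemma Contiguous.compLeft {U V W : Type} [DecidableEq V] [DecidableEq W]
    {K : ASC U} {L : ASC V} {M : ASC W} {f g : SMap K L}
    (h : Contiguous f g) (e : SMap L M) :
    Contiguous (e.comp f) (e.comp g) := fun σ hσ => by
  have h2 := e.map_faces (h hσ)
  simpa [SMap.comp, Finset.image_union, Finset.image_image] using h2

lemma Contiguous.compRight {U V W : Type} [DecidableEq V] [DecidableEq W]
    {K : ASC U} {L : ASC V} {M : ASC W} {f g : SMap L M}
    (h : Contiguous f g) (e : SMap K L) :
    Contiguous (f.comp e) (g.comp e) := fun σ hσ => by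
  have h2 := h (e.map_faces hσ)
  simpa [SMap.comp, Finset.image_image] using h2

lemma ContigClass.compLeft {U V W : Type} [DecidableEq V] [DecidableEq W]
    {K : ASC U} {L : ASC V} {M : ASC W} {f g : SMap K L}
    (h : ContigClass f g) (e : SMap L M) :
    ContigClass (e.comp f) (e.comp g) :=
  Relation.ReflTransGen.lift (fun x => e.comp x) (fun _ _ (hc : Contiguous _ _) => hc.compLeft e) _ _ h

lemma ContigClass.compRight {U V W : Type} [DecidableEq V] [DecidableEq W]
    {K : ASC U} {L : ASC V} {M : ASC W} {f g : SMap L M}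
    (h : ContigClass f g) (e : SMap K L) :
    ContigClass (f.comp e) (g.comp e) :=
  Relation.ReflTransGen.lift (fun x : SMap L M => x.comp e) (fun _ _ (hc : Contiguous _ _) => hc.compRight e) _ _ h

lemma Contiguous.restrict' {V W : Type} [DecidableEq W] {N K : ASC V} {L : ASC W}
    (hsub : IsSubcomplex N K) {f g : SMap K L} (h : Contiguous f g) :
    Contiguous (SMap.restrict hsub f) (SMap.restrict hsub g) :=
  fun _ hσ => h (hsub hσ)

lemma ContigClass.restrict' {V W : Type} [DecidableEq W] {N K : ASC V} {L : ASC W}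
    (hsub : IsSubcomplex N K) {f g : SMap K L} (h : ContigClass f g) :
    ContigClass (SMap.restrict hsub f) (SMap.restrict hsub g) :=
  Relation.ReflTransGen.lift (fun x => SMap.restrict hsub x)
    (fun _ _ (hc : Contiguous _ _) => hc.restrict' hsub) _ _ h

/-- Transfer of an `SDcover` along comparison maps. -/
lemma SDcover_transfer {VL VL' VN VN' : Type} [DecidableEq VL] [DecidableEq VL']
    [DecidableEq VN] [DecidableEq VN']
    {L : ASC VL} {L' : ASC VL'} {N : ASC VN} {N' : ASC VN'} {m : ℕ}
    (phi : Fin m → SMap L L') (psi : Fin m → SMap N N')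
    (beta : SMap N L) (alpha : SMap L' N')
    (hcomm : ∀ i, ContigClass (alpha.comp ((phi i).comp beta)) (psi i))
    {n : ℕ} (hcov : SDcover phi n) : SDcover psi n := by
  obtain ⟨Ls, h, hcover, hcontig⟩ := hcov
  refine ⟨fun k =>
    { faces := {σ | σ ∈ N.faces ∧ σ.image beta.toFun ∈ (Ls k).faces}
      nonempty_of_mem := fun σ hσ => N.nonempty_of_mem hσ.1
      down_closed := fun σ hσ τ hτσ hτ =>
        ⟨N.down_closed hσ.1 hτσ hτ,
         (Ls k).down_closed hσ.2 (Finset.image_subset_image hτσ) (hτ.image _)⟩ },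
    fun k σ hσ => hσ.1, ?_, ?_⟩
  · intro σ hσ
    obtain ⟨k, hk⟩ := hcover _ (beta.map_faces hσ)
    exact ⟨k, hσ, hk⟩
  · intro k i j
    set Nk : ASC VN :=
      { faces := {σ | σ ∈ N.faces ∧ σ.image beta.toFun ∈ (Ls k).faces}
        nonempty_of_mem := fun σ hσ => N.nonempty_of_mem hσ.1
        down_closed := fun σ hσ τ hτσ hτ =>
          ⟨N.down_closed hσ.1 hτσ hτ,
           (Ls k).down_closed hσ.2 (Finset.image_subset_image hτσ) (hτ.image _)⟩ }
    have hNk : IsSubcomplex Nk N := fun σ hσ => hσ.1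
    -- beta restricted, as a map Nk → Ls k
    let betaK : SMap Nk (Ls k) := ⟨beta.toFun, fun σ hσ => hσ.2⟩
    have key : ∀ i : Fin m,
        SMap.restrict hNk (alpha.comp ((phi i).comp beta))
          = alpha.comp ((SMap.restrict (h k) (phi i)).comp betaK) := fun _ => rfl
    have step1 : ContigClass (SMap.restrict hNk (psi i))
        (alpha.comp ((SMap.restrict (h k) (phi i)).comp betaK)) := by
      rw [← key]
      exact ((hcomm i).restrict' hNk).symm'
    have step2 : ContigClass
        (alpha.comp ((SMap.restrict (h k) (phi i)).comp betaK))
        (alpha.comp ((SMap.restrict (h k) (phi j)).comp betaK)) :=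
      ((hcontig k i j).compRight betaK).compLeft alpha
    have step3 : ContigClass
        (alpha.comp ((SMap.restrict (h k) (phi j)).comp betaK))
        (SMap.restrict hNk (psi j)) := by
      rw [← key]
      exact (hcomm j).restrict' hNk
    exact (step1.trans step2).trans step3

/-- One direction of the comparison, needing only the commuting hypothesis. -/
lemma SD_le_of_comm {VL VL' VN VN' : Type} [DecidableEq VL] [DecidableEq VL']
    [DecidableEq VN] [DecidableEq VN']
    {L : ASC VL} {L' : ASC VL'} {N : ASC VN} {N' : ASC VN'} {m : ℕ}
    (phi : Fin m → SMap L L') (psi : Fin m → SMap N N')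
    (beta : SMap N L) (alpha : SMap L' N')
    (hcomm : ∀ i, ContigClass (alpha.comp ((phi i).comp beta)) (psi i)) :
    SD psi ≤ SD phi := by
  apply sInf_le_sInf
  rintro x ⟨n, rfl, hcov⟩
  exact ⟨n, rfl, SDcover_transfer phi psi beta alpha hcomm hcov⟩

end Aux

/-- if `β : N → L` and `α : L' → N'` are strong equivalences and
`α ∘ φ_i ∘ β ∼ ψ_i` for all `i`, then `SD(φ₁,…,φ_m) = SD(ψ₁,…,ψ_m)`. -/
theorem SD_eq_of_strong_equivalences
    {VL VL' VN VN' : Type} [DecidableEq VL] [DecidableEq VL']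
    [DecidableEq VN] [DecidableEq VN']
    {L : ASC VL} {L' : ASC VL'} {N : ASC VN} {N' : ASC VN'} {m : ℕ}
    (phi : Fin m → SMap L L') (psi : Fin m → SMap N N')
    (beta : SMap N L) (alpha : SMap L' N')
    (hbeta : IsStrongEquiv beta) (halpha : IsStrongEquiv alpha)
    (hcomm : ∀ i, ContigClass (alpha.comp ((phi i).comp beta)) (psi i)) :
    SD phi = SD psi := by
  obtain ⟨beta', hb1, hb2⟩ := hbeta
  obtain ⟨alpha', ha1, ha2⟩ := halpha
  refine le_antisymm ?_ (SD_le_of_comm phi psi beta alpha hcomm)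
  -- build the commuting hypothesis for the reverse direction
  refine SD_le_of_comm psi phi beta' alpha' (fun i => ?_)
  -- α' ∘ ψ_i ∘ β' ∼ α' ∘ (α ∘ φ_i ∘ β) ∘ β' = (α'∘α) ∘ φ_i ∘ (β∘β') ∼ φ_i
  have s1 : ContigClass (alpha'.comp ((psi i).comp beta'))
      (alpha'.comp ((alpha.comp ((phi i).comp beta)).comp beta')) :=
    (((hcomm i).symm').compRight beta').compLeft alpha'
  have assoc : alpha'.comp ((alpha.comp ((phi i).comp beta)).comp beta')
      = (alpha'.comp alpha).comp ((phi i).comp (beta.comp beta')) := rfl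
  have s2 : ContigClass ((alpha'.comp alpha).comp ((phi i).comp (beta.comp beta')))
      ((alpha'.comp alpha).comp ((phi i).comp (SMap.id L))) :=
    (hb2.compLeft (phi i)).compLeft (alpha'.comp alpha)
  have s3 : ContigClass ((alpha'.comp alpha).comp ((phi i).comp (SMap.id L)))
      ((SMap.id L').comp ((phi i).comp (SMap.id L))) :=
    ha1.compRight ((phi i).comp (SMap.id L))
  have hid : (SMap.id L').comp ((phi i).comp (SMap.id L)) = phi i := rfl
  rw [assoc] at s1
  rw [hid] at s3
  exact (s1.trans s2).trans s3
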